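/- Suppose n ≥ m tasks have weights in [1, w_max] and are assigned to m resources with positive delays. Then the cost of any Nash assignment is at most 4·w_max times the cost of any assignment: max_{N Nash} C(N) ≤ 4·w_max · min_{A} C(A). -/

import Mathlib

open Finset

/-- The load of resource `ℓ` under assignment `A`. -/
noncomputable def resLoad {n m : ℕ} (d : Fin m → ℝ) (w : Fin n → ℝ)
    (A : Fin n → Fin m) (ℓ : Fin m) : ℝ :=
  d ℓ * ∑ i ∈ univ.filter (fun i => A i = ℓ), w i

/-- The social cost of assignment `A`: sum of the loads of the tasks. -/
noncomputable def socialCost {n m : ℕ} (d : Fin m → ℝ) (w : Fin n → ℝ)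
    (A : Fin n → Fin m) : ℝ :=
  ∑ i : Fin n, resLoad d w A (A i)

/-- `A` is a Nash assignment: no task can strictly decrease its load by moving. -/
def IsNash {n m : ℕ} (d : Fin m → ℝ) (w : Fin n → ℝ) (A : Fin n → Fin m) : Prop :=
  ∀ (i : Fin n) (ℓ : Fin m), resLoad d w A (A i) ≤ resLoad d w A ℓ + w i * d ℓ

/-- Regrouping a sum over tasks by the resource the assignment sends them to. -/
lemma sum_comp_fiber {n m : ℕ} (A : Fin n → Fin m) (f : Fin m → ℝ) :
    ∑ i : Fin n, f (A i)
      = ∑ ℓ : Fin m, ((univ.filter (fun i => A i = ℓ)).card : ℝ) * f ℓ := by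
  rw [← Finset.sum_fiberwise_of_maps_to' (fun i _ => Finset.mem_univ (A i)) f]
  exact Finset.sum_congr rfl fun ℓ _ => by rw [Finset.sum_const, nsmul_eq_mul]

/-- If `n ≥ m` tasks with weights in `[1, wmax]` are assigned to `m` resources with
positive delays, then the cost of any Nash assignment is at most `4 * wmax` times the
cost of any assignment. -/
theorem coordination_ratio_bound
    (n m : ℕ) (hnm : m ≤ n) (d : Fin m → ℝ) (hd : ∀ ℓ, 0 < d ℓ)
    (wmax : ℝ) (w : Fin n → ℝ) (hw : ∀ i, 1 ≤ w i ∧ w i ≤ wmax)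
    (N : Fin n → Fin m) (hN : IsNash d w N) (A : Fin n → Fin m) :
    socialCost d w N ≤ 4 * wmax * socialCost d w A := by
  rcases Nat.eq_zero_or_pos n with hn | hn
  · subst hn
    simp [socialCost]
  -- abbreviations
  set S : Fin m → ℝ := fun ℓ => ∑ i ∈ univ.filter (fun i => N i = ℓ), w i with hS
  set T : Fin m → ℝ := fun ℓ => ∑ i ∈ univ.filter (fun i => A i = ℓ), w i with hT
  set kN : Fin m → ℝ := fun ℓ => ((univ.filter (fun i => N i = ℓ)).card : ℝ) with hkN
  set kA : Fin m → ℝ := fun ℓ => ((univ.filter (fun i => A i = ℓ)).card : ℝ) with hkA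
  have hW : 1 ≤ wmax := le_trans (hw ⟨0, hn⟩).1 (hw ⟨0, hn⟩).2
  have hwpos : ∀ i, 0 ≤ w i := fun i => le_trans zero_le_one (hw i).1
  have hSnn : ∀ ℓ, 0 ≤ S ℓ := fun ℓ => Finset.sum_nonneg fun i _ => hwpos i
  have hTnn : ∀ ℓ, 0 ≤ T ℓ := fun ℓ => Finset.sum_nonneg fun i _ => hwpos i
  have hkAnn : ∀ ℓ, (0:ℝ) ≤ kA ℓ := fun ℓ => Nat.cast_nonneg _
  -- w i ≤ T (A i)
  have hwT : ∀ i, w i ≤ T (A i) := fun i =>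
    Finset.single_le_sum (fun j _ => hwpos j)
      (Finset.mem_filter.mpr ⟨Finset.mem_univ i, rfl⟩)
  -- kA ℓ ≤ T ℓ
  have hkAT : ∀ ℓ, kA ℓ ≤ T ℓ := by
    intro ℓ
    calc kA ℓ = ∑ _i ∈ univ.filter (fun i => A i = ℓ), (1:ℝ) := by
          simp [hkA]
      _ ≤ T ℓ := Finset.sum_le_sum fun i _ => (hw i).1
  -- S ℓ ≤ wmax * kN ℓ
  have hSkN : ∀ ℓ, S ℓ ≤ wmax * kN ℓ := by
    intro ℓ
    calc S ℓ ≤ ∑ _i ∈ univ.filter (fun i => N i = ℓ), wmax :=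
          Finset.sum_le_sum fun i _ => (hw i).2
      _ = wmax * kN ℓ := by simp [hkN, mul_comm]
  -- rewritten costs
  have hCN : socialCost d w N = ∑ ℓ, kN ℓ * (d ℓ * S ℓ) := by
    exact sum_comp_fiber N (fun ℓ => d ℓ * S ℓ)
  have hCA : socialCost d w A = ∑ ℓ, kA ℓ * (d ℓ * T ℓ) := by
    exact sum_comp_fiber A (fun ℓ => d ℓ * T ℓ)
  set B : ℝ := ∑ ℓ, kA ℓ * (d ℓ * S ℓ) with hB
  have hxnn : 0 ≤ socialCost d w N := by
    rw [hCN]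
    exact Finset.sum_nonneg fun ℓ _ => mul_nonneg (Nat.cast_nonneg _)
      (mul_nonneg (hd ℓ).le (hSnn ℓ))
  have hann : 0 ≤ socialCost d w A := by
    rw [hCA]
    exact Finset.sum_nonneg fun ℓ _ => mul_nonneg (hkAnn ℓ)
      (mul_nonneg (hd ℓ).le (hTnn ℓ))
  have hBnn : 0 ≤ B :=
    Finset.sum_nonneg fun ℓ _ => mul_nonneg (hkAnn ℓ)
      (mul_nonneg (hd ℓ).le (hSnn ℓ))
  -- Step 1: C(N) ≤ B + C(A)
  have step1 : socialCost d w N ≤ B + socialCost d w A := by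
    have h1 : socialCost d w N ≤ ∑ i : Fin n, (resLoad d w N (A i) + w i * d (A i)) :=
      Finset.sum_le_sum fun i _ => hN i (A i)
    have h2 : ∀ i : Fin n, resLoad d w N (A i) + w i * d (A i)
        ≤ resLoad d w N (A i) + resLoad d w A (A i) := by
      intro i
      have : w i * d (A i) ≤ T (A i) * d (A i) :=
        mul_le_mul_of_nonneg_right (hwT i) (hd _).le
      simpa [resLoad, mul_comm] using this
    have h3 : socialCost d w N
        ≤ ∑ i : Fin n, (resLoad d w N (A i) + resLoad d w A (A i)) :=
      h1.trans (Finset.sum_le_sum fun i _ => h2 i)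
    have h4 : (∑ i : Fin n, resLoad d w N (A i)) = B := by
      rw [hB]
      simpa [resLoad] using sum_comp_fiber A (fun ℓ => d ℓ * S ℓ)
    calc socialCost d w N
        ≤ ∑ i : Fin n, (resLoad d w N (A i) + resLoad d w A (A i)) := h3
      _ = (∑ i : Fin n, resLoad d w N (A i)) + socialCost d w A := by
          rw [Finset.sum_add_distrib]; rfl
      _ = B + socialCost d w A := by rw [h4]
  -- Step 2 (Cauchy-Schwarz): B^2 ≤ C(A) * (wmax * C(N))
  have step2 : B ^ 2 ≤ socialCost d w A * (wmax * socialCost d w N) := by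
    have hcs : B ^ 2 ≤ (∑ ℓ, kA ℓ ^ 2 * d ℓ) * ∑ ℓ, d ℓ * S ℓ ^ 2 := by
      refine sum_sq_le_sum_mul_sum_of_sq_eq_mul univ
        (fun ℓ _ => mul_nonneg (sq_nonneg _) (hd ℓ).le)
        (fun ℓ _ => mul_nonneg (hd ℓ).le (sq_nonneg _))
        (fun ℓ _ => by ring)
    have h5 : (∑ ℓ, kA ℓ ^ 2 * d ℓ) ≤ socialCost d w A := by
      rw [hCA]
      refine Finset.sum_le_sum fun ℓ _ => ?_
      have : kA ℓ * kA ℓ * d ℓ ≤ kA ℓ * T ℓ * d ℓ :=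
        mul_le_mul_of_nonneg_right
          (mul_le_mul_of_nonneg_left (hkAT ℓ) (hkAnn ℓ)) (hd ℓ).le
      calc kA ℓ ^ 2 * d ℓ = kA ℓ * kA ℓ * d ℓ := by ring
        _ ≤ kA ℓ * T ℓ * d ℓ := this
        _ = kA ℓ * (d ℓ * T ℓ) := by ring
    have h6 : (∑ ℓ, d ℓ * S ℓ ^ 2) ≤ wmax * socialCost d w N := by
      rw [hCN, Finset.mul_sum]
      refine Finset.sum_le_sum fun ℓ _ => ?_
      have : d ℓ * (S ℓ * S ℓ) ≤ d ℓ * (wmax * kN ℓ * S ℓ) :=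
        mul_le_mul_of_nonneg_left
          (mul_le_mul_of_nonneg_right (hSkN ℓ) (hSnn ℓ)) (hd ℓ).le
      calc d ℓ * S ℓ ^ 2 = d ℓ * (S ℓ * S ℓ) := by ring
        _ ≤ d ℓ * (wmax * kN ℓ * S ℓ) := this
        _ = wmax * (kN ℓ * (d ℓ * S ℓ)) := by ring
    calc B ^ 2 ≤ (∑ ℓ, kA ℓ ^ 2 * d ℓ) * ∑ ℓ, d ℓ * S ℓ ^ 2 := hcs
      _ ≤ socialCost d w A * (wmax * socialCost d w N) := by
          refine mul_le_mul h5 h6 ?_ hann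
          exact Finset.sum_nonneg fun ℓ _ => mul_nonneg (hd ℓ).le (sq_nonneg _)
  -- final algebra: x ≤ B + a, B² ≤ a·W·x, 0 ≤ a,x,B, 1 ≤ W  ⟹  x ≤ 4·W·a
  set x := socialCost d w N
  set a := socialCost d w A
  by_contra hcon
  push_neg at hcon
  have h4Wa : 0 ≤ 4 * wmax * a := by nlinarith [mul_nonneg hann (sub_nonneg.mpr hW)]
  have hx0 : 0 < x := lt_of_le_of_lt h4Wa hcon
  have haW : a ≤ 4 * wmax * a := by nlinarith [mul_nonneg hann (sub_nonneg.mpr hW)]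
  have hax : a < x := lt_of_le_of_lt haW hcon
  have hkey : (x - a) ^ 2 ≤ a * (wmax * x) := by
    calc (x - a) ^ 2 ≤ B ^ 2 :=
          pow_le_pow_left₀ (by linarith) (by linarith) 2
      _ ≤ a * (wmax * x) := step2
  nlinarith [hkey, mul_lt_mul_of_pos_right hcon hx0,
    mul_nonneg (mul_nonneg hann (sub_nonneg.mpr hW)) hxnn,
    mul_pos hx0 hx0]
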